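/- Let ρ > 0, c > 0, and let N ≥ 2 be a natural number. Define x = (1/ρ)·ln(2^{1−ρ}/c^ρ) and y = (1/ρ)·ln((N−1)·2^{1−ρ}/c^ρ), and set S = exp(−ρx) + (N−1)·exp(−ρy). Then S = 2^ρ c^ρ, and the first-order conditions of the exit equilibrium hold: exp(−ρx)·S^{1/ρ−1} = c and (N−1)·exp(−ρy)·S^{1/ρ−1} = c. Moreover, the outlier's cost at this profile equals S^{1/ρ} + c x = c(2 + x). -/

import Mathlib

open Real

/-- The exit-equilibrium profile of the approximate weakest-link game:
with `x = (1/ρ)ln(2^{1−ρ}/c^ρ)` (outlier) and `y = (1/ρ)ln((N−1)2^{1−ρ}/c^ρ)`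
(participants), the quantity `S = exp(−ρx) + (N−1)exp(−ρy)` equals `2^ρ c^ρ`, the
first-order conditions hold, and the outlier's cost equals `c(2 + x)`. -/
theorem weakest_link_exit_equilibrium
    (ρ c : ℝ) (hρ : 0 < ρ) (hc : 0 < c)
    (N : ℕ) (hN : 2 ≤ N)
    (x y S : ℝ)
    (hx : x = (1 / ρ) * Real.log ((2 : ℝ) ^ (1 - ρ) / c ^ ρ))
    (hy : y = (1 / ρ) * Real.log (((N : ℝ) - 1) * (2 : ℝ) ^ (1 - ρ) / c ^ ρ))
    (hS : S = Real.exp (-ρ * x) + ((N : ℝ) - 1) * Real.exp (-ρ * y)) :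
    S = (2 : ℝ) ^ ρ * c ^ ρ ∧
    Real.exp (-ρ * x) * S ^ (1 / ρ - 1 : ℝ) = c ∧
    ((N : ℝ) - 1) * Real.exp (-ρ * y) * S ^ (1 / ρ - 1 : ℝ) = c ∧
    S ^ (1 / ρ : ℝ) + c * x = c * (2 + x) := by
  have hρ' : ρ ≠ 0 := ne_of_gt hρ
  have hN1 : (0:ℝ) < (N:ℝ) - 1 := by
    have : (2:ℝ) ≤ (N:ℝ) := by exact_mod_cast hN
    linarith
  have h2 : (0:ℝ) < (2:ℝ) ^ (1 - ρ) := Real.rpow_pos_of_pos two_pos _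
  have hcρ : (0:ℝ) < c ^ ρ := Real.rpow_pos_of_pos hc _
  have hA : (0:ℝ) < (2:ℝ) ^ (1 - ρ) / c ^ ρ := div_pos h2 hcρ
  have hB : (0:ℝ) < ((N:ℝ) - 1) * (2:ℝ) ^ (1 - ρ) / c ^ ρ :=
    div_pos (mul_pos hN1 h2) hcρ
  have hex : Real.exp (-ρ * x) = c ^ ρ / (2:ℝ) ^ (1 - ρ) := by
    rw [hx]
    have h1 : -ρ * ((1/ρ) * Real.log ((2:ℝ) ^ (1 - ρ) / c ^ ρ))
        = -Real.log ((2:ℝ) ^ (1 - ρ) / c ^ ρ) := by field_simp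
    rw [h1, Real.exp_neg, Real.exp_log hA, inv_div]
  have hey : Real.exp (-ρ * y) = c ^ ρ / (((N:ℝ) - 1) * (2:ℝ) ^ (1 - ρ)) := by
    rw [hy]
    have h1 : -ρ * ((1/ρ) * Real.log (((N:ℝ) - 1) * (2:ℝ) ^ (1 - ρ) / c ^ ρ))
        = -Real.log (((N:ℝ) - 1) * (2:ℝ) ^ (1 - ρ) / c ^ ρ) := by field_simp
    rw [h1, Real.exp_neg, Real.exp_log hB, inv_div]
  have hpow2 : (2:ℝ) ^ (1 - ρ) * (2:ℝ) ^ ρ = 2 := by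
    rw [← Real.rpow_add two_pos]
    norm_num
  have hSval : S = (2:ℝ) ^ ρ * c ^ ρ := by
    rw [hS, hex, hey]
    field_simp
    linear_combination (-1 : ℝ) * hpow2
  have h2c : (0:ℝ) < 2 * c := by linarith
  have hS2c : S = (2 * c) ^ ρ := by
    rw [hSval, Real.mul_rpow (by norm_num) hc.le]
  have hSpow : ∀ t : ℝ, S ^ t = (2 * c) ^ (ρ * t) := by
    intro t
    rw [hS2c, ← Real.rpow_mul h2c.le]
  have hS1 : S ^ (1 / ρ - 1 : ℝ) = (2:ℝ) ^ (1 - ρ) * c ^ (1 - ρ) := by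
    rw [hSpow]
    have : ρ * (1 / ρ - 1) = 1 - ρ := by field_simp
    rw [this, Real.mul_rpow (by norm_num) hc.le]
  have hSρ : S ^ (1 / ρ : ℝ) = 2 * c := by
    rw [hSpow]
    have : ρ * (1 / ρ) = 1 := by field_simp
    rw [this, Real.rpow_one]
  have hcc : c ^ ρ * c ^ (1 - ρ) = c := by
    rw [← Real.rpow_add hc]; norm_num
  refine ⟨hSval, ?_, ?_, ?_⟩
  · rw [hex, hS1]
    field_simp
    linear_combination hcc
  · rw [hey, hS1]
    field_simp
    linear_combination hcc
  · rw [hSρ]; ring
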